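/- Let p be a prime and T_p the p-th Chebyshev polynomial of the first kind. Then 2(T_p(X/2) − 1) = P(X)²·(X − 2), where P(X) = ∏_{j=1}^{(p−1)/2}(X − 2cos(2πj/p)). -/

import Mathlib

open Polynomial

lemma dickson_monic_natDegree : ∀ n : ℕ,
    (Polynomial.dickson 1 (1:ℝ) (n+1)).Monic ∧
    (Polynomial.dickson 1 (1:ℝ) (n+1)).natDegree = n+1 := by
  intro n
  induction n using Nat.strong_induction_on with
  | _ n ih =>
    match n with
    | 0 => simpa [Polynomial.dickson_one] using monic_X
    | 1 =>
      have h2 : Polynomial.dickson 1 (1:ℝ) 2 = X ^ 2 - C 2 := by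
        rw [Polynomial.dickson_two]
        have h1 : ((1:ℕ):ℝ[X]) = 1 := by norm_num
        have h2 : ((3:ℝ[X]) - 1) = C 2 := by
          have : (C 2 : ℝ[X]) = ((2:ℕ):ℝ[X]) := by
            rw [show (2:ℝ) = ((2:ℕ):ℝ) by norm_num, Polynomial.C_eq_natCast]
          rw [this]; norm_num
        rw [h1, h2, Polynomial.C_1, one_mul]
      rw [h2]
      constructor
      · apply (monic_X_pow 2).sub_of_left
        rw [degree_X_pow]
        exact lt_of_le_of_lt (degree_C_le) (by norm_num)
      · rw [natDegree_X_pow_sub_C]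
    | (k+2) =>
      have ih1 := ih (k+1) (by omega)
      have ih0 := ih k (by omega)
      have hrec := Polynomial.dickson_add_two 1 (1:ℝ) (k+1)
      have hmon : (X * Polynomial.dickson 1 (1:ℝ) (k+2)).Monic := monic_X.mul ih1.1
      have hdegP : (X * Polynomial.dickson 1 (1:ℝ) (k+2)).natDegree = k+3 := by
        rw [monic_X.natDegree_mul ih1.1, ih1.2, natDegree_X]; omega
      have hdegQ : (Polynomial.C (1:ℝ) * Polynomial.dickson 1 (1:ℝ) (k+1)).natDegree = k+1 := by
        rw [Polynomial.C_1, one_mul, ih0.2]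
      have hlt : (Polynomial.C (1:ℝ) * Polynomial.dickson 1 (1:ℝ) (k+1)).natDegree
          < (X * Polynomial.dickson 1 (1:ℝ) (k+2)).natDegree := by omega
      constructor
      · show (Polynomial.dickson 1 (1:ℝ) (k+1+2)).Monic
        rw [hrec]
        exact hmon.sub_of_left (degree_lt_degree hlt)
      · show (Polynomial.dickson 1 (1:ℝ) (k+1+2)).natDegree = k+3
        rw [hrec, natDegree_sub_eq_left_of_natDegree_lt hlt, hdegP]

lemma sq_X_sub_C_dvd {q : ℝ[X]} {a : ℝ} (h0 : q.eval a = 0)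
    (h1 : q.derivative.eval a = 0) : (X - C a) ^ 2 ∣ q := by
  obtain ⟨r, hr⟩ := (dvd_iff_isRoot).mpr h0
  have hd : q.derivative = r + (X - C a) * r.derivative := by
    rw [hr, derivative_mul]; simp
  have hra : r.eval a = 0 := by
    have := congrArg (fun s => Polynomial.eval a s) hd
    simpa [h1] using this.symm
  obtain ⟨s, hs⟩ := (dvd_iff_isRoot).mpr hra
  exact ⟨s, by rw [hr, hs]; ring⟩

theorem chebyshev_factorization
    (p : ℕ) (hp : p.Prime) (hodd : Odd p) :
    (2 : ℝ[X]) * ((Polynomial.Chebyshev.T ℝ p).comp (Polynomial.C (2⁻¹ : ℝ) * Polynomial.X) - 1)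
      = (∏ j ∈ Finset.range ((p - 1) / 2),
          (Polynomial.X - Polynomial.C (2 * Real.cos (2 * Real.pi * (j + 1) / p)))) ^ 2
        * (Polynomial.X - Polynomial.C 2) := by
  classical
  have hp2 : 2 ≤ p := hp.two_le
  set m := (p - 1) / 2 with hm
  obtain ⟨t, ht⟩ := hodd
  have hpm : p = 2 * m + 1 := by omega
  have hp0 : (0:ℝ) < p := by exact_mod_cast (by omega : 0 < p)
  set c : ℕ → ℝ := fun j => 2 * Real.cos (2 * Real.pi * (j + 1) / p) with hc
  set θ : ℕ → ℝ := fun j => 2 * Real.pi * (j + 1) / p with hθ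
  set L : ℝ[X] := 2 * ((Polynomial.Chebyshev.T ℝ p).comp (Polynomial.C (2⁻¹ : ℝ) * Polynomial.X) - 1) with hLdef
  -- L as Dickson polynomial
  have hinv : (⅟(2:ℝ)) = 2⁻¹ := invOf_eq_inv 2
  have hC2 : (Polynomial.C (2:ℝ)) = 2 := map_ofNat Polynomial.C 2
  have hLd : L = Polynomial.dickson 1 (1:ℝ) p - Polynomial.C 2 := by
    rw [Polynomial.dickson_one_one_eq_chebyshev_T, hinv, hC2, hLdef]; ring
  have hp' : p - 1 + 1 = p := by omega
  have hdick := dickson_monic_natDegree (p - 1)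
  rw [hp'] at hdick
  have hLm : L.Monic := by
    rw [hLd]
    exact hdick.1.sub_of_left (degree_lt_degree (by rw [hdick.2, natDegree_C]; omega))
  have hLdeg : L.natDegree = p := by
    rw [hLd, natDegree_sub_eq_left_of_natDegree_lt (by rw [hdick.2, natDegree_C]; omega), hdick.2]
  -- evaluation of L
  have hevalL : ∀ x : ℝ, L.eval x = 2 * ((Polynomial.Chebyshev.T ℝ p).eval (2⁻¹ * x) - 1) := by
    intro x; simp [hLdef, eval_comp]
  -- angle facts
  have hθpos : ∀ j, 0 < θ j := by
    intro j
    apply div_pos _ hp0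
    have : (0:ℝ) < (j:ℝ) + 1 := by positivity
    positivity
  have hθlt : ∀ j < m, θ j < Real.pi := by
    intro j hj
    rw [hθ]
    rw [div_lt_iff₀ hp0]
    have h1 : ((j:ℝ) + 1) * 2 ≤ (2 * m : ℕ) := by
      push_cast; have : (j:ℝ) + 1 ≤ m := by exact_mod_cast Nat.succ_le_of_lt hj
      linarith
    have h2 : ((2 * m : ℕ) : ℝ) < p := by exact_mod_cast (by omega : 2 * m < p)
    nlinarith [Real.pi_pos]
  have hpθ : ∀ j, (p : ℝ) * θ j = ((j + 1 : ℕ) : ℝ) * (2 * Real.pi) := by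
    intro j; rw [hθ]; push_cast; field_simp
  have hcos1 : ∀ j, Real.cos ((p:ℝ) * θ j) = 1 := by
    intro j; rw [hpθ j, Real.cos_nat_mul_two_pi]
  have hsin0 : ∀ j, Real.sin ((p:ℝ) * θ j) = 0 := by
    intro j
    rw [hpθ j]
    have : ((j + 1 : ℕ) : ℝ) * (2 * Real.pi) = ((2 * (j + 1) : ℕ) : ℝ) * Real.pi := by
      push_cast; ring
    rw [this, Real.sin_nat_mul_pi]
  have hhalf : ∀ j, (2:ℝ)⁻¹ * c j = Real.cos (θ j) := by
    intro j; rw [hc, hθ]; ring_nf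
  -- roots
  have hcast : ∀ x : ℝ, (((p:ℤ):ℝ)) * x = (p:ℝ) * x := by intro x; push_cast; ring
  have hroot : ∀ j, L.eval (c j) = 0 := by
    intro j
    rw [hevalL, hhalf j, Polynomial.Chebyshev.T_real_cos, hcast, hcos1 j]
    ring
  have hroot2 : L.eval 2 = 0 := by
    have h0 : (2:ℝ)⁻¹ * 2 = Real.cos 0 := by rw [Real.cos_zero]; norm_num
    rw [hevalL, h0, Polynomial.Chebyshev.T_real_cos]
    simp
  -- derivative roots
  have hLder : L.derivative
      = 2 * (Polynomial.C (2⁻¹:ℝ)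
        * ((derivative (Polynomial.Chebyshev.T ℝ p)).comp (Polynomial.C (2⁻¹:ℝ) * Polynomial.X))) := by
    rw [hLdef, derivative_mul, derivative_sub, derivative_one, derivative_comp]
    simp [derivative_C]
  have hdroot : ∀ j < m, L.derivative.eval (c j) = 0 := by
    intro j hj
    have hsinθ : Real.sin (θ j) ≠ 0 :=
      ne_of_gt (Real.sin_pos_of_pos_of_lt_pi (hθpos j) (hθlt j hj))
    have hU : (Polynomial.Chebyshev.U ℝ ((p:ℤ) - 1)).eval (Real.cos (θ j)) = 0 := by
      have h := Polynomial.Chebyshev.U_real_cos (θ j) ((p:ℤ) - 1)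
      push_cast at h
      rw [sub_add_cancel, hsin0 j] at h
      exact (mul_eq_zero.mp h).resolve_right hsinθ
    rw [hLder, Polynomial.Chebyshev.T_derivative_eq_U]
    rw [eval_mul, eval_mul, eval_C, eval_comp]
    simp only [eval_mul, eval_C, eval_X]
    rw [hhalf j, hU]
    ring
  -- distinctness
  have hθIcc : ∀ j < m, θ j ∈ Set.Icc 0 Real.pi := by
    intro j hj; exact ⟨(hθpos j).le, (hθlt j hj).le⟩
  have hθinj : ∀ j k, θ j = θ k → j = k := by
    intro j k hjk
    rw [hθ] at hjk
    simp only at hjk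
    rw [div_eq_div_iff (ne_of_gt hp0) (ne_of_gt hp0)] at hjk
    have h1 := mul_right_cancel₀ (ne_of_gt hp0) hjk
    have h2 : ((j:ℝ)+1) = ((k:ℝ)+1) :=
      mul_left_cancel₀ (ne_of_gt (by positivity : (0:ℝ) < 2 * Real.pi)) h1
    have : (j:ℝ) = k := by linarith
    exact_mod_cast this
  have hcinj : ∀ j < m, ∀ k < m, c j = c k → j = k := by
    intro j hj k hk hjk
    rw [hc] at hjk; simp only at hjk
    have : Real.cos (θ j) = Real.cos (θ k) := by
      rw [hθ]; simp only; linarith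
    exact hθinj j k (Real.injOn_cos (hθIcc j hj) (hθIcc k hk) this)
  have hne2 : ∀ j < m, c j ≠ 2 := by
    intro j hj hEq
    have : Real.cos (θ j) = Real.cos 0 := by
      rw [Real.cos_zero, hc] at *
      simp only at hEq
      rw [hθ]; simp only; linarith
    have h0 : θ j = 0 :=
      Real.injOn_cos (hθIcc j hj) (by constructor <;> [rfl; exact Real.pi_pos.le]) this
    exact absurd h0 (ne_of_gt (hθpos j))
  -- divisibility
  have hdvd : (∏ j ∈ Finset.range m, (Polynomial.X - Polynomial.C (c j)) ^ 2)
      * (Polynomial.X - Polynomial.C 2) ∣ L := by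
    apply IsCoprime.mul_dvd
    · apply IsCoprime.prod_left
      intro j hj
      simp only [Finset.mem_range] at hj
      exact (Polynomial.isCoprime_X_sub_C_of_isUnit_sub
        ((sub_ne_zero.mpr (hne2 j hj)).isUnit)).pow_left
    · apply Finset.prod_dvd_of_coprime
      · intro i hi j hj hij
        simp only [Finset.coe_range, Set.mem_Iio] at hi hj
        have : c i ≠ c j := fun h => hij (hcinj i hi j hj h)
        exact (Polynomial.isCoprime_X_sub_C_of_isUnit_sub
          ((sub_ne_zero.mpr this).isUnit)).pow
      · intro j hj
        simp only [Finset.mem_range] at hj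
        exact sq_X_sub_C_dvd (hroot j) (hdroot j hj)
    · exact dvd_iff_isRoot.mpr hroot2
  -- degrees of RHS
  have hPm : (∏ j ∈ Finset.range m, (Polynomial.X - Polynomial.C (c j))).Monic :=
    monic_prod_of_monic _ _ fun j _ => monic_X_sub_C _
  have hPdeg : (∏ j ∈ Finset.range m, (Polynomial.X - Polynomial.C (c j))).natDegree = m := by
    rw [natDegree_prod_of_monic _ _ fun j _ => monic_X_sub_C _]
    simp [natDegree_X_sub_C]
  have hRm : ((∏ j ∈ Finset.range m, (Polynomial.X - Polynomial.C (c j))) ^ 2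
      * (Polynomial.X - Polynomial.C 2)).Monic := (hPm.pow 2).mul (monic_X_sub_C 2)
  have hRdeg : ((∏ j ∈ Finset.range m, (Polynomial.X - Polynomial.C (c j))) ^ 2
      * (Polynomial.X - Polynomial.C 2)).natDegree = p := by
    rw [(hPm.pow 2).natDegree_mul (monic_X_sub_C 2), hPm.natDegree_pow, hPdeg,
      natDegree_X_sub_C]
    omega
  show L = (∏ j ∈ Finset.range m, (Polynomial.X - Polynomial.C (c j))) ^ 2
      * (Polynomial.X - Polynomial.C 2)
  symm
  apply Polynomial.eq_of_dvd_of_natDegree_le_of_leadingCoeff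
  · rw [← Finset.prod_pow]
    exact hdvd
  · rw [hLdeg, hRdeg]
  · rw [hRm.leadingCoeff, hLm.leadingCoeff]
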